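/- (Inversion symmetry of almost dual prepotentials, case d ≠ 1.) Let F* be a smooth function on an open set V ⊆ ℝ^N satisfying the associativity equations with respect to a constant symmetric invertible matrix g and the dual quasihomogeneity condition Σ_σ p^σ ∂_σ F* = 2F* + (1/(1−d)) g_{ab}p^a p^b, with d ≠ 1. Let t₁(p) = ((1−d)/2) g_{ab}p^a p^b and ι(p) = p/t₁(p). Then on the open set V' = {p : t₁(p) ≠ 0 and ι(p) ∈ V}, the function F̂*(p) := t₁(p)² F*(ι(p)) satisfies the associativity equations with respect to g. -/

import Mathlib

open scoped BigOperators

/-- Partial derivative of `f` in the `α`-th coordinate direction. -/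
noncomputable def pd {N : ℕ} (α : Fin N) (f : (Fin N → ℝ) → ℝ) : (Fin N → ℝ) → ℝ :=
  fun t => fderiv ℝ f t (Pi.single α 1)

/-- Third partial derivatives `c_{αβγ} = ∂³F/∂t^α∂t^β∂t^γ`. -/
noncomputable def c3 {N : ℕ} (F : (Fin N → ℝ) → ℝ) (α β γ : Fin N) : (Fin N → ℝ) → ℝ :=
  pd α (pd β (pd γ F))

/-- `η_{αβ} = δ_{α+β,N+1}` (in 1-based index notation); in 0-based indexing this is
`β = Fin.rev α`.  It coincides with its own inverse `η^{αβ}`. -/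
def eta {N : ℕ} (α β : Fin N) : ℝ := if β = α.rev then 1 else 0

/-- `t₁(p) = ((1-d)/2) g_{ab} p^a p^b`. -/
noncomputable def t1q {N : ℕ} (g : Matrix (Fin N) (Fin N) ℝ) (d : ℝ)
    (p : Fin N → ℝ) : ℝ :=
  ((1 - d)/2) * ∑ a, ∑ b, g a b * p a * p b

/-- The dual inversion map `ι(p) = p / t₁(p)`. -/
noncomputable def iota {N : ℕ} (g : Matrix (Fin N) (Fin N) ℝ) (d : ℝ)
    (p : Fin N → ℝ) : Fin N → ℝ := fun i => p i / t1q g d p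

/-- `Fs` satisfies the associativity equations with respect to the constant symmetric
invertible matrix `g` on `V`:
`c*_{abλ} g^{λμ} c*_{μce} = c*_{cbλ} g^{λμ} c*_{μae}` where `(g^{λμ})` is the matrix
inverse of `g` and `c*` are the third partial derivatives of `Fs`. -/
def IsAssocG {N : ℕ} (Fs : (Fin N → ℝ) → ℝ) (g : Matrix (Fin N) (Fin N) ℝ)
    (V : Set (Fin N → ℝ)) : Prop :=
  ∀ p ∈ V, ∀ a b c e : Fin N,
    ∑ lam, ∑ mu, c3 Fs a b lam p * g⁻¹ lam mu * c3 Fs mu c e p =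
    ∑ lam, ∑ mu, c3 Fs c b lam p * g⁻¹ lam mu * c3 Fs mu a e p

section Infra
variable {N : ℕ}

lemma pd_congr_nhds {f h : (Fin N → ℝ) → ℝ} {p : Fin N → ℝ} (hfh : f =ᶠ[nhds p] h)
    (α : Fin N) : pd α f p = pd α h p := by
  unfold pd; rw [hfh.fderiv_eq]

lemma pd_of_hasFDerivAt {f : (Fin N → ℝ) → ℝ} {L : (Fin N → ℝ) →L[ℝ] ℝ} {p : Fin N → ℝ}
    (h : HasFDerivAt f L p) (α : Fin N) : pd α f p = L (Pi.single α 1) := by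
  unfold pd; rw [h.fderiv]

lemma pd_add {f h : (Fin N → ℝ) → ℝ} {p : Fin N → ℝ} (hf : DifferentiableAt ℝ f p)
    (hh : DifferentiableAt ℝ h p) (α : Fin N) :
    pd α (fun x => f x + h x) p = pd α f p + pd α h p := by
  unfold pd; rw [fderiv_fun_add hf hh]; rfl

lemma pd_sub {f h : (Fin N → ℝ) → ℝ} {p : Fin N → ℝ} (hf : DifferentiableAt ℝ f p)
    (hh : DifferentiableAt ℝ h p) (α : Fin N) :
    pd α (fun x => f x - h x) p = pd α f p - pd α h p := by
  unfold pd; rw [fderiv_fun_sub hf hh]; rfl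

lemma pd_mul {f h : (Fin N → ℝ) → ℝ} {p : Fin N → ℝ} (hf : DifferentiableAt ℝ f p)
    (hh : DifferentiableAt ℝ h p) (α : Fin N) :
    pd α (fun x => f x * h x) p = pd α f p * h p + f p * pd α h p := by
  unfold pd; rw [fderiv_fun_mul hf hh]
  simp [ContinuousLinearMap.add_apply, ContinuousLinearMap.smul_apply]
  ring

lemma pd_const {p : Fin N → ℝ} (r : ℝ) (α : Fin N) : pd α (fun _ => r) p = 0 := by
  unfold pd; rw [fderiv_fun_const]; rfl

lemma pd_const_mul {f : (Fin N → ℝ) → ℝ} {p : Fin N → ℝ} (hf : DifferentiableAt ℝ f p)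
    (r : ℝ) (α : Fin N) : pd α (fun x => r * f x) p = r * pd α f p := by
  rw [pd_mul (differentiableAt_const r) hf, pd_const]; ring

lemma pd_sum {ι : Type*} {s : Finset ι} {f : ι → (Fin N → ℝ) → ℝ} {p : Fin N → ℝ}
    (hf : ∀ i ∈ s, DifferentiableAt ℝ (f i) p) (α : Fin N) :
    pd α (fun x => ∑ i ∈ s, f i x) p = ∑ i ∈ s, pd α (f i) p := by
  unfold pd; rw [fderiv_fun_sum hf]; simp

lemma pd_coord {p : Fin N → ℝ} (i α : Fin N) :
    pd α (fun x => x i) p = if i = α then 1 else 0 := by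
  have : HasFDerivAt (fun x : Fin N → ℝ => x i)
      (ContinuousLinearMap.proj i : (Fin N → ℝ) →L[ℝ] ℝ) p :=
    (ContinuousLinearMap.proj (R := ℝ) (φ := fun _ : Fin N => ℝ) i).hasFDerivAt
  rw [pd_of_hasFDerivAt this]
  simp [ContinuousLinearMap.proj_apply, Pi.single_apply]

lemma pd_inv {f : (Fin N → ℝ) → ℝ} {p : Fin N → ℝ} (hf : DifferentiableAt ℝ f p)
    (hne : f p ≠ 0) (α : Fin N) :
    pd α (fun x => (f x)⁻¹) p = -pd α f p / (f p) ^ 2 := by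
  have hg : DifferentiableAt ℝ (fun y : ℝ => y⁻¹) (f p) := differentiableAt_inv hne
  have : (fun x => (f x)⁻¹) = (fun y : ℝ => y⁻¹) ∘ f := rfl
  unfold pd
  rw [this, fderiv_comp p hg hf]
  simp [fderiv_inv]
  ring

end Infra

section Smooth
variable {N : ℕ}

lemma contDiffAt_pd {f : (Fin N → ℝ) → ℝ} {p : Fin N → ℝ}
    (hf : ContDiffAt ℝ (⊤ : ℕ∞) f p) (α : Fin N) :
    ContDiffAt ℝ (⊤ : ℕ∞) (pd α f) p := by
  have h1 : ContDiffAt ℝ (⊤ : ℕ∞) (fderiv ℝ f) p :=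
    hf.fderiv_right (by simp)
  exact h1.clm_apply contDiffAt_const

lemma pd_comm {f : (Fin N → ℝ) → ℝ} {p : Fin N → ℝ}
    (hf : ContDiffAt ℝ (⊤ : ℕ∞) f p) (α β : Fin N) :
    pd α (pd β f) p = pd β (pd α f) p := by
  have hsymm : IsSymmSndFDerivAt ℝ f p := hf.isSymmSndFDerivAt (by simp; exact WithTop.coe_le_coe.2 le_top)
  have hd : DifferentiableAt ℝ (fderiv ℝ f) p :=
    (hf.fderiv_right (m := (⊤ : ℕ∞)) (by simp)).differentiableAt (by simp)
  have key : ∀ v w : Fin N → ℝ,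
      fderiv ℝ (fun t => fderiv ℝ f t v) p w = fderiv ℝ (fderiv ℝ f) p w v := by
    intro v w
    rw [fderiv_clm_apply hd (differentiableAt_const v)]
    simp
  show fderiv ℝ (fun t => fderiv ℝ f t (Pi.single β 1)) p (Pi.single α 1) = _
  rw [key]
  rw [hsymm (Pi.single α 1) (Pi.single β 1)]
  show _ = fderiv ℝ (fun t => fderiv ℝ f t (Pi.single α 1)) p (Pi.single β 1)
  rw [key]

end Smooth

noncomputable def Gq {N : ℕ} (g : Matrix (Fin N) (Fin N) ℝ) (p : Fin N → ℝ) : ℝ :=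
  ∑ a, ∑ b, g a b * p a * p b

noncomputable def Pl {N : ℕ} (g : Matrix (Fin N) (Fin N) ℝ) (c : Fin N) (p : Fin N → ℝ) : ℝ :=
  ∑ σ, g c σ * p σ

section Poly
variable {N : ℕ} {g : Matrix (Fin N) (Fin N) ℝ} {d : ℝ}

lemma diffAt_coord (p : Fin N → ℝ) (i : Fin N) :
    DifferentiableAt ℝ (fun x : Fin N → ℝ => x i) p :=
  (ContinuousLinearMap.proj (R := ℝ) (φ := fun _ : Fin N => ℝ) i).differentiableAt

lemma contDiff_coord (i : Fin N) : ContDiff ℝ (⊤ : ℕ∞) (fun x : Fin N → ℝ => x i) :=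
  (ContinuousLinearMap.proj (R := ℝ) (φ := fun _ : Fin N => ℝ) i).contDiff

lemma contDiff_Gq : ContDiff ℝ (⊤ : ℕ∞) (Gq g) := by
  unfold Gq
  exact ContDiff.sum fun a _ => ContDiff.sum fun b _ =>
    ((contDiff_const.mul (contDiff_coord a)).mul (contDiff_coord b))

lemma contDiff_Pl (c : Fin N) : ContDiff ℝ (⊤ : ℕ∞) (Pl g c) := by
  unfold Pl
  exact ContDiff.sum fun s _ => contDiff_const.mul (contDiff_coord s)

lemma t1q_eq : t1q g d = fun p => ((1 - d) / 2) * Gq g p := rfl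

lemma contDiff_t1q : ContDiff ℝ (⊤ : ℕ∞) (t1q g d) := by
  rw [t1q_eq]; exact contDiff_const.mul contDiff_Gq

lemma diffAt_Gq (p : Fin N → ℝ) : DifferentiableAt ℝ (Gq g) p :=
  contDiff_Gq.differentiable (by decide) p

lemma diffAt_Pl (c : Fin N) (p : Fin N → ℝ) : DifferentiableAt ℝ (Pl g c) p :=
  (contDiff_Pl c).differentiable (by decide) p

lemma diffAt_t1q (p : Fin N → ℝ) : DifferentiableAt ℝ (t1q g d) p :=
  contDiff_t1q.differentiable (by decide) p

lemma pd_Pl (c : Fin N) (p : Fin N → ℝ) (α : Fin N) : pd α (Pl g c) p = g c α := by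
  unfold Pl
  rw [pd_sum (fun s _ => (differentiableAt_const _).fun_mul (diffAt_coord p s))]
  have : ∀ s : Fin N, pd α (fun x => g c s * x s) p = g c s * (if s = α then 1 else 0) := by
    intro s
    rw [pd_const_mul (diffAt_coord p s), pd_coord]
  rw [Finset.sum_congr rfl fun s _ => this s]
  simp

lemma pd_Gq (hgsymm : g.IsSymm) (p : Fin N → ℝ) (α : Fin N) :
    pd α (Gq g) p = 2 * Pl g α p := by
  have hg : ∀ i j, g i j = g j i := fun i j => by
    conv_lhs => rw [← hgsymm]
    rfl
  unfold Gq
  rw [pd_sum (fun a _ => DifferentiableAt.fun_sum fun b _ =>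
    ((differentiableAt_const (g a b)).fun_mul (diffAt_coord p a)).fun_mul (diffAt_coord p b))]
  have h1 : ∀ a : Fin N, pd α (fun x => ∑ b, g a b * x a * x b) p
      = ∑ b, (g a b * (if a = α then 1 else 0) * p b + g a b * p a * (if b = α then 1 else 0)) := by
    intro a
    rw [pd_sum (fun b _ => ((differentiableAt_const _).fun_mul (diffAt_coord p a)).fun_mul (diffAt_coord p b))]
    refine Finset.sum_congr rfl fun b _ => ?_
    rw [pd_mul ((differentiableAt_const _).fun_mul (diffAt_coord p a)) (diffAt_coord p b),
      pd_mul (differentiableAt_const _) (diffAt_coord p a), pd_coord, pd_coord, pd_const]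
    ring
  rw [Finset.sum_congr rfl fun a _ => h1 a]
  have h2 : ∀ a : Fin N, ∑ b, (g a b * (if a = α then 1 else 0) * p b
        + g a b * p a * (if b = α then 1 else 0))
      = (if a = α then ∑ b, g a b * p b else 0) + g a α * p a := by
    intro a
    rw [Finset.sum_add_distrib]
    congr 1
    · split_ifs with h <;> simp [h]
    · rw [Finset.sum_eq_single α] <;> simp +contextual
  rw [Finset.sum_congr rfl fun a _ => h2 a, Finset.sum_add_distrib]
  rw [Finset.sum_ite_eq' Finset.univ α fun a => ∑ b, g a b * p b]
  have : ∑ a, g a α * p a = ∑ a, g α a * p a :=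
    Finset.sum_congr rfl fun a _ => by rw [hg a α]
  simp only [Finset.mem_univ, if_true, this]
  unfold Pl
  ring

lemma pd_t1q (hgsymm : g.IsSymm) (p : Fin N → ℝ) (α : Fin N) :
    pd α (t1q g d) p = (1 - d) * Pl g α p := by
  rw [t1q_eq, pd_const_mul (diffAt_Gq p), pd_Gq hgsymm]
  ring

end Poly

section Iota
variable {N : ℕ} {g : Matrix (Fin N) (Fin N) ℝ} {d : ℝ}

lemma iotac_eq (i : Fin N) : (fun x => iota g d x i) = fun x => x i * (t1q g d x)⁻¹ := by
  funext x; simp [iota, div_eq_mul_inv]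

lemma diffAt_inv_t1q {p : Fin N → ℝ} (hτ : t1q g d p ≠ 0) :
    DifferentiableAt ℝ (fun x => (t1q g d x)⁻¹) p :=
  (diffAt_t1q p).inv hτ

lemma diffAt_iotac {p : Fin N → ℝ} (hτ : t1q g d p ≠ 0) (i : Fin N) :
    DifferentiableAt ℝ (fun x => iota g d x i) p := by
  rw [iotac_eq]
  exact (diffAt_coord p i).fun_mul (diffAt_inv_t1q hτ)

lemma contDiffAt_iotac {p : Fin N → ℝ} (hτ : t1q g d p ≠ 0) (i : Fin N) :
    ContDiffAt ℝ (⊤ : ℕ∞) (fun x => iota g d x i) p := by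
  rw [iotac_eq]
  exact ((contDiff_coord i).contDiffAt).mul ((contDiff_t1q.contDiffAt).inv hτ)

lemma contDiffAt_iota {p : Fin N → ℝ} (hτ : t1q g d p ≠ 0) :
    ContDiffAt ℝ (⊤ : ℕ∞) (iota g d) p :=
  contDiffAt_pi.mpr fun i => contDiffAt_iotac hτ i

lemma pd_iotac (hgsymm : g.IsSymm) {p : Fin N → ℝ} (hτ : t1q g d p ≠ 0) (i α : Fin N) :
    pd α (fun x => iota g d x i) p
      = (if i = α then 1 else 0) * (t1q g d p)⁻¹
        - p i * ((1 - d) * Pl g α p) / (t1q g d p) ^ 2 := by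
  rw [iotac_eq]
  rw [pd_mul (diffAt_coord p i) (diffAt_inv_t1q hτ), pd_coord,
    pd_inv (diffAt_t1q p) hτ, pd_t1q hgsymm]
  ring

lemma pd_comp_pi {f : (Fin N → ℝ) → ℝ} {φ : (Fin N → ℝ) → (Fin N → ℝ)} {p : Fin N → ℝ}
    (hf : DifferentiableAt ℝ f (φ p)) (hφ : ∀ i, DifferentiableAt ℝ (fun x => φ x i) p)
    (α : Fin N) :
    pd α (fun x => f (φ x)) p = ∑ i, pd i f (φ p) * pd α (fun x => φ x i) p := by
  have hφ' : DifferentiableAt ℝ φ p := differentiableAt_pi.mpr hφ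
  unfold pd
  rw [show (fun x => f (φ x)) = f ∘ φ from rfl, fderiv_comp p hf hφ']
  simp only [ContinuousLinearMap.comp_apply]
  set v := fderiv ℝ φ p (Pi.single α 1) with hv
  have hvi : ∀ i, fderiv ℝ (fun x => φ x i) p (Pi.single α 1) = v i := by
    intro i
    have heq : (fun x => φ x i)
        = (ContinuousLinearMap.proj (R := ℝ) (φ := fun _ : Fin N => ℝ) i) ∘ φ := rfl
    rw [heq, fderiv_comp p (ContinuousLinearMap.proj _).differentiableAt hφ']
    simp [ContinuousLinearMap.comp_apply, hv]
  have hvexp : v = ∑ i, (v i) • (Pi.single i (1 : ℝ) : Fin N → ℝ) := by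
    funext j
    simp [Finset.sum_apply, Pi.single_apply]
  rw [hvexp, map_sum]
  refine Finset.sum_congr rfl fun i _ => ?_
  rw [map_smul, hvi i]
  simp [mul_comm]

lemma pd_comp_iota (hgsymm : g.IsSymm) {p : Fin N → ℝ} (hτ : t1q g d p ≠ 0)
    {h : (Fin N → ℝ) → ℝ} (hh : DifferentiableAt ℝ h (iota g d p)) (α : Fin N) :
    pd α (fun x => h (iota g d x)) p
      = (t1q g d p)⁻¹ * pd α h (iota g d p)
        - ((1 - d) * Pl g α p / (t1q g d p) ^ 2) * ∑ i, p i * pd i h (iota g d p) := by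
  rw [pd_comp_pi hh (fun i => diffAt_iotac hτ i) α]
  have : ∀ i : Fin N, pd i h (iota g d p) * pd α (fun x => iota g d x i) p
      = (if i = α then pd i h (iota g d p) * (t1q g d p)⁻¹ else 0)
        - p i * pd i h (iota g d p) * ((1 - d) * Pl g α p / (t1q g d p) ^ 2) := by
    intro i
    rw [pd_iotac hgsymm hτ]
    split_ifs <;> ring
  rw [Finset.sum_congr rfl fun i _ => this i, Finset.sum_sub_distrib,
    Finset.sum_ite_eq' Finset.univ α]
  simp only [Finset.mem_univ, if_true]
  rw [Finset.mul_sum]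
  ring_nf
  congr 1
  exact Finset.sum_congr rfl fun i _ => by ring

end Iota

section Euler
variable {N : ℕ} {g : Matrix (Fin N) (Fin N) ℝ} {d : ℝ}
variable {V : Set (Fin N → ℝ)} {Fs : (Fin N → ℝ) → ℝ}

lemma diffAt_of_contDiffAt {f : (Fin N → ℝ) → ℝ} {p : Fin N → ℝ}
    (hf : ContDiffAt ℝ (⊤ : ℕ∞) f p) : DifferentiableAt ℝ f p :=
  hf.differentiableAt (by decide)

lemma pd_inner_swap {f : (Fin N → ℝ) → ℝ} {p : Fin N → ℝ} (hV : IsOpen V)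
    (hf : ∀ x ∈ V, ContDiffAt ℝ (⊤ : ℕ∞) f x) (hp : p ∈ V) (α β γ : Fin N) :
    pd α (pd β (pd γ f)) p = pd α (pd γ (pd β f)) p := by
  apply pd_congr_nhds
  filter_upwards [hV.mem_nhds hp] with x hx
  exact pd_comm (hf x hx) β γ

lemma c3_swap12 {f : (Fin N → ℝ) → ℝ} {p : Fin N → ℝ}
    (hf : ContDiffAt ℝ (⊤ : ℕ∞) f p) (α β γ : Fin N) :
    c3 f α β γ p = c3 f β α γ p :=
  pd_comm (contDiffAt_pd hf γ) α β

lemma c3_swap23 {f : (Fin N → ℝ) → ℝ} {p : Fin N → ℝ} (hV : IsOpen V)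
    (hf : ∀ x ∈ V, ContDiffAt ℝ (⊤ : ℕ∞) f x) (hp : p ∈ V) (α β γ : Fin N) :
    c3 f α β γ p = c3 f α γ β p :=
  pd_inner_swap hV hf hp α β γ

lemma eulerE1 (hgsymm : g.IsSymm) (hV : IsOpen V)
    (hFs : ∀ p ∈ V, ContDiffAt ℝ (⊤ : ℕ∞) Fs p)
    (hQH : ∀ p ∈ V, (∑ σ, p σ * pd σ Fs p) = 2 * Fs p + (1 / (1 - d)) * Gq g p) :
    ∀ q ∈ V, ∀ b, ∑ σ, q σ * pd σ (pd b Fs) q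
      = pd b Fs q + (2 / (1 - d)) * Pl g b q := by
  intro q hq b
  have hdFs : ∀ σ : Fin N, DifferentiableAt ℝ (pd σ Fs) q :=
    fun σ => diffAt_of_contDiffAt (contDiffAt_pd (hFs q hq) σ)
  have heq : (fun x => ∑ σ, x σ * pd σ Fs x)
      =ᶠ[nhds q] (fun x => 2 * Fs x + (1 / (1 - d)) * Gq g x) := by
    filter_upwards [hV.mem_nhds hq] with x hx using hQH x hx
  have h1 := pd_congr_nhds heq b
  rw [pd_sum (fun σ _ => (diffAt_coord q σ).fun_mul (hdFs σ))] at h1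
  have h2 : ∀ σ : Fin N, pd b (fun x => x σ * pd σ Fs x) q
      = (if σ = b then pd σ Fs q else 0) + q σ * pd b (pd σ Fs) q := by
    intro σ
    rw [pd_mul (diffAt_coord q σ) (hdFs σ), pd_coord]
    split_ifs <;> ring
  rw [Finset.sum_congr rfl fun σ _ => h2 σ, Finset.sum_add_distrib,
    Finset.sum_ite_eq' Finset.univ b] at h1
  rw [pd_add ((differentiableAt_const _).fun_mul (diffAt_of_contDiffAt (hFs q hq)))
      ((differentiableAt_const _).fun_mul (diffAt_Gq q)),
    pd_const_mul (diffAt_of_contDiffAt (hFs q hq)),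
    pd_const_mul (diffAt_Gq q), pd_Gq hgsymm] at h1
  simp only [Finset.mem_univ, if_true] at h1
  have h3 : ∑ σ, q σ * pd b (pd σ Fs) q = ∑ σ, q σ * pd σ (pd b Fs) q :=
    Finset.sum_congr rfl fun σ _ => by rw [pd_comm (hFs q hq) b σ]
  rw [h3] at h1
  have : ∑ σ, q σ * pd σ (pd b Fs) q = pd b Fs q + (1 / (1 - d)) * (2 * Pl g b q) := by
    linarith [h1]
  rw [this]; ring

lemma eulerE2 (hgsymm : g.IsSymm) (hV : IsOpen V)
    (hFs : ∀ p ∈ V, ContDiffAt ℝ (⊤ : ℕ∞) Fs p)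
    (hQH : ∀ p ∈ V, (∑ σ, p σ * pd σ Fs p) = 2 * Fs p + (1 / (1 - d)) * Gq g p) :
    ∀ q ∈ V, ∀ a b, ∑ σ, q σ * c3 Fs a σ b q = (2 / (1 - d)) * g b a := by
  intro q hq a b
  have hd2 : ∀ σ : Fin N, DifferentiableAt ℝ (pd σ (pd b Fs)) q := by
    intro σ
    refine diffAt_of_contDiffAt (contDiffAt_pd ?_ σ)
    exact contDiffAt_pd (hFs q hq) b
  have heq : (fun x => ∑ σ, x σ * pd σ (pd b Fs) x)
      =ᶠ[nhds q] (fun x => pd b Fs x + (2 / (1 - d)) * Pl g b x) := by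
    filter_upwards [hV.mem_nhds hq] with x hx using eulerE1 hgsymm hV hFs hQH x hx b
  have h1 := pd_congr_nhds heq a
  rw [pd_sum (fun σ _ => (diffAt_coord q σ).fun_mul (hd2 σ))] at h1
  have h2 : ∀ σ : Fin N, pd a (fun x => x σ * pd σ (pd b Fs) x) q
      = (if σ = a then pd σ (pd b Fs) q else 0) + q σ * c3 Fs a σ b q := by
    intro σ
    rw [pd_mul (diffAt_coord q σ) (hd2 σ), pd_coord]
    unfold c3
    split_ifs <;> ring
  rw [Finset.sum_congr rfl fun σ _ => h2 σ, Finset.sum_add_distrib,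
    Finset.sum_ite_eq' Finset.univ a] at h1
  rw [pd_add (diffAt_of_contDiffAt (contDiffAt_pd (hFs q hq) b))
      ((differentiableAt_const _).fun_mul (diffAt_Pl b q)),
    pd_const_mul (diffAt_Pl b q), pd_Pl] at h1
  simp only [Finset.mem_univ, if_true] at h1
  have h4 : pd a (pd b Fs) q = pd b (pd a Fs) q := pd_comm (hFs q hq) a b
  -- h1 : pd a (pd b Fs) q + ∑ σ, q σ * c3 Fs a σ b q = pd a (pd b Fs) q + (2/(1-d)) * g b a
  linarith [h1]

end Euler

section Vals
variable {N : ℕ} {g : Matrix (Fin N) (Fin N) ℝ} {d : ℝ}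

lemma t1q_unfold (p : Fin N → ℝ) : t1q g d p = ((1 - d) / 2) * Gq g p := rfl

lemma Gq_p_eq {p : Fin N → ℝ} (hk : (1:ℝ) - d ≠ 0) :
    Gq g p = 2 * t1q g d p / (1 - d) := by
  rw [t1q_unfold]; field_simp

lemma Gq_iota {p : Fin N → ℝ} (hτ : t1q g d p ≠ 0) :
    Gq g (iota g d p) = Gq g p / (t1q g d p) ^ 2 := by
  unfold Gq iota
  rw [Finset.sum_div]
  refine Finset.sum_congr rfl fun a _ => ?_
  rw [Finset.sum_div]
  refine Finset.sum_congr rfl fun b _ => ?_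
  rw [pow_two]
  field_simp

lemma Gq_iota' {p : Fin N → ℝ} (hk : (1:ℝ) - d ≠ 0) (hτ : t1q g d p ≠ 0) :
    Gq g (iota g d p) = 2 / ((1 - d) * t1q g d p) := by
  rw [Gq_iota hτ, Gq_p_eq hk]
  field_simp

lemma Pl_iota {p : Fin N → ℝ} (hτ : t1q g d p ≠ 0) (c : Fin N) :
    Pl g c (iota g d p) = Pl g c p / t1q g d p := by
  unfold Pl iota
  rw [Finset.sum_div]
  refine Finset.sum_congr rfl fun σ _ => ?_
  field_simp

lemma p_eq_tau_iota {p : Fin N → ℝ} (hτ : t1q g d p ≠ 0) (i : Fin N) :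
    p i = t1q g d p * iota g d p i := by
  unfold iota
  field_simp

lemma isOpen_Vprime (V : Set (Fin N → ℝ)) (hV : IsOpen V) :
    IsOpen {x | t1q g d x ≠ 0 ∧ iota g d x ∈ V} := by
  rw [isOpen_iff_mem_nhds]
  rintro x ⟨hx1, hx2⟩
  have h1 : ∀ᶠ y in nhds x, t1q g d y ≠ 0 :=
    (contDiff_t1q.continuous.continuousAt).eventually_ne hx1
  have h2 : ∀ᶠ y in nhds x, iota g d y ∈ V :=
    (contDiffAt_iota hx1).continuousAt.preimage_mem_nhds (hV.mem_nhds hx2)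
  exact h1.and h2

end Vals

section Steps
variable {N : ℕ} {g : Matrix (Fin N) (Fin N) ℝ} {d : ℝ}
variable {V : Set (Fin N → ℝ)} {Fs : (Fin N → ℝ) → ℝ}

lemma stepA (hgsymm : g.IsSymm) (hd : d ≠ 1) (hV : IsOpen V)
    (hFs : ∀ p ∈ V, ContDiffAt ℝ (⊤ : ℕ∞) Fs p)
    (hQH : ∀ p ∈ V, (∑ σ, p σ * pd σ Fs p) = 2 * Fs p + (1 / (1 - d)) * Gq g p)
    {p : Fin N → ℝ} (hτ : t1q g d p ≠ 0) (hq : iota g d p ∈ V) (c : Fin N) :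
    pd c (fun x => (t1q g d x) ^ 2 * Fs (iota g d x)) p
      = t1q g d p * pd c Fs (iota g d p) - (2 / (1 - d)) * Pl g c p := by
  have hk : (1:ℝ) - d ≠ 0 := sub_ne_zero.mpr fun h => hd h.symm
  have hFsq : DifferentiableAt ℝ Fs (iota g d p) := diffAt_of_contDiffAt (hFs _ hq)
  have hcomp : DifferentiableAt ℝ (fun x => Fs (iota g d x)) p :=
    diffAt_of_contDiffAt ((hFs _ hq).comp p (contDiffAt_iota hτ))
  have h0 : (fun x => (t1q g d x) ^ 2 * Fs (iota g d x))
      = fun x => (t1q g d x * t1q g d x) * Fs (iota g d x) := by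
    funext x; ring
  rw [h0, pd_mul ((diffAt_t1q p).fun_mul (diffAt_t1q p)) hcomp,
    pd_mul (diffAt_t1q p) (diffAt_t1q p), pd_t1q hgsymm,
    pd_comp_iota hgsymm hτ hFsq c]
  have hE0 : ∑ i, p i * pd i Fs (iota g d p)
      = t1q g d p * (2 * Fs (iota g d p) + (1 / (1 - d)) * Gq g (iota g d p)) := by
    have h1 : ∀ i : Fin N, p i * pd i Fs (iota g d p)
        = t1q g d p * (iota g d p i * pd i Fs (iota g d p)) := by
      intro i; rw [p_eq_tau_iota hτ i]; ring
    rw [Finset.sum_congr rfl fun i _ => h1 i, ← Finset.mul_sum, hQH _ hq]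
  rw [hE0, Gq_iota' hk hτ]
  field_simp
  ring
end Steps

section Steps2
variable {N : ℕ} {g : Matrix (Fin N) (Fin N) ℝ} {d : ℝ}
variable {V : Set (Fin N → ℝ)} {Fs : (Fin N → ℝ) → ℝ}

lemma stepB (hgsymm : g.IsSymm) (hd : d ≠ 1) (hV : IsOpen V)
    (hFs : ∀ p ∈ V, ContDiffAt ℝ (⊤ : ℕ∞) Fs p)
    (hQH : ∀ p ∈ V, (∑ σ, p σ * pd σ Fs p) = 2 * Fs p + (1 / (1 - d)) * Gq g p)
    {p : Fin N → ℝ} (hτ : t1q g d p ≠ 0) (hq : iota g d p ∈ V) (b c : Fin N) :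
    pd b (pd c (fun x => (t1q g d x) ^ 2 * Fs (iota g d x))) p
      = pd b (pd c Fs) (iota g d p) - 2 * Pl g b p * Pl g c p / t1q g d p
        - (2 / (1 - d)) * g b c := by
  have hk : (1:ℝ) - d ≠ 0 := sub_ne_zero.mpr fun h => hd h.symm
  have hpdc_q : ContDiffAt ℝ (⊤ : ℕ∞) (pd c Fs) (iota g d p) :=
    contDiffAt_pd (hFs _ hq) c
  have hcompc : DifferentiableAt ℝ (fun x => pd c Fs (iota g d x)) p :=
    diffAt_of_contDiffAt (hpdc_q.comp p (contDiffAt_iota hτ))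
  have hcong : pd b (pd c (fun x => (t1q g d x) ^ 2 * Fs (iota g d x))) p
      = pd b (fun x => t1q g d x * pd c Fs (iota g d x) - (2 / (1 - d)) * Pl g c x) p := by
    apply pd_congr_nhds
    filter_upwards [(isOpen_Vprime V hV).mem_nhds ⟨hτ, hq⟩] with x hx
    exact stepA hgsymm hd hV hFs hQH hx.1 hx.2 c
  rw [hcong,
    pd_sub ((diffAt_t1q p).fun_mul hcompc) ((differentiableAt_const _).fun_mul (diffAt_Pl c p)),
    pd_mul (diffAt_t1q p) hcompc, pd_t1q hgsymm, pd_const_mul (diffAt_Pl c p), pd_Pl,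
    pd_comp_iota hgsymm hτ (diffAt_of_contDiffAt hpdc_q) b]
  have hE1 : ∑ i, p i * pd i (pd c Fs) (iota g d p)
      = t1q g d p * (pd c Fs (iota g d p) + (2 / (1 - d)) * (Pl g c p / t1q g d p)) := by
    have h1 : ∀ i : Fin N, p i * pd i (pd c Fs) (iota g d p)
        = t1q g d p * (iota g d p i * pd i (pd c Fs) (iota g d p)) := by
      intro i; rw [p_eq_tau_iota hτ i]; ring
    rw [Finset.sum_congr rfl fun i _ => h1 i, ← Finset.mul_sum,
      eulerE1 hgsymm hV hFs hQH _ hq c, Pl_iota hτ c]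
  rw [hE1]
  have hgcb : g c b = g b c := by
    conv_lhs => rw [← hgsymm]
    rfl
  rw [hgcb]
  field_simp
  ring

end Steps2

section Steps3
variable {N : ℕ} {g : Matrix (Fin N) (Fin N) ℝ} {d : ℝ}
variable {V : Set (Fin N → ℝ)} {Fs : (Fin N → ℝ) → ℝ}

lemma stepC (hgsymm : g.IsSymm) (hd : d ≠ 1) (hV : IsOpen V)
    (hFs : ∀ p ∈ V, ContDiffAt ℝ (⊤ : ℕ∞) Fs p)
    (hQH : ∀ p ∈ V, (∑ σ, p σ * pd σ Fs p) = 2 * Fs p + (1 / (1 - d)) * Gq g p)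
    {p : Fin N → ℝ} (hτ : t1q g d p ≠ 0) (hq : iota g d p ∈ V) (a b c : Fin N) :
    c3 (fun x => (t1q g d x) ^ 2 * Fs (iota g d x)) a b c p
      = (1 / t1q g d p) * c3 Fs a b c (iota g d p)
        - (2 / t1q g d p) * (Pl g a p * g b c + Pl g b p * g a c + Pl g c p * g a b)
        + (2 * (1 - d) / (t1q g d p) ^ 2) * (Pl g a p * Pl g b p * Pl g c p) := by
  have hk : (1:ℝ) - d ≠ 0 := sub_ne_zero.mpr fun h => hd h.symm
  have hg : ∀ i j, g i j = g j i := by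
    intro i j
    conv_lhs => rw [← hgsymm]
    rfl
  have h2q : ContDiffAt ℝ (⊤ : ℕ∞) (pd b (pd c Fs)) (iota g d p) :=
    contDiffAt_pd (contDiffAt_pd (hFs _ hq) c) b
  have hcomp1 : DifferentiableAt ℝ (fun x => pd b (pd c Fs) (iota g d x)) p :=
    diffAt_of_contDiffAt (h2q.comp p (contDiffAt_iota hτ))
  have hfun2 : (fun x => 2 * Pl g b x * Pl g c x / t1q g d x)
      = fun x => 2 * Pl g b x * Pl g c x * (t1q g d x)⁻¹ := by
    funext x; rw [div_eq_mul_inv]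
  have hd2 : DifferentiableAt ℝ (fun x => 2 * Pl g b x * Pl g c x / t1q g d x) p := by
    rw [hfun2]
    exact (((differentiableAt_const _).fun_mul (diffAt_Pl b p)).fun_mul (diffAt_Pl c p)).fun_mul
      (diffAt_inv_t1q hτ)
  have hcong : c3 (fun x => (t1q g d x) ^ 2 * Fs (iota g d x)) a b c p
      = pd a (fun x => pd b (pd c Fs) (iota g d x)
          - 2 * Pl g b x * Pl g c x / t1q g d x - (2 / (1 - d)) * g b c) p := by
    show pd a _ p = _
    apply pd_congr_nhds
    filter_upwards [(isOpen_Vprime V hV).mem_nhds ⟨hτ, hq⟩] with x hx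
    exact stepB hgsymm hd hV hFs hQH hx.1 hx.2 b c
  rw [hcong,
    pd_sub (hcomp1.fun_sub hd2) (differentiableAt_const _),
    pd_sub hcomp1 hd2, pd_const,
    pd_comp_iota hgsymm hτ (diffAt_of_contDiffAt h2q) a]
  have hE2 : ∑ i, p i * pd i (pd b (pd c Fs)) (iota g d p)
      = t1q g d p * ((2 / (1 - d)) * g c b) := by
    have h1 : ∀ i : Fin N, p i * pd i (pd b (pd c Fs)) (iota g d p)
        = t1q g d p * (iota g d p i * c3 Fs b i c (iota g d p)) := by
      intro i
      have : pd i (pd b (pd c Fs)) (iota g d p) = c3 Fs b i c (iota g d p) :=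
        c3_swap12 (hFs _ hq) i b c
      rw [← this, p_eq_tau_iota hτ i]; ring
    rw [Finset.sum_congr rfl fun i _ => h1 i, ← Finset.mul_sum,
      eulerE2 hgsymm hV hFs hQH _ hq b c]
  rw [hE2]
  have h2nd : pd a (fun x => 2 * Pl g b x * Pl g c x / t1q g d x) p
      = 2 * (g b a * Pl g c p + Pl g b p * g c a) / t1q g d p
        - 2 * Pl g b p * Pl g c p * ((1 - d) * Pl g a p) / (t1q g d p) ^ 2 := by
    rw [hfun2,
      pd_mul (((differentiableAt_const _).fun_mul (diffAt_Pl b p)).fun_mul (diffAt_Pl c p))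
        (diffAt_inv_t1q hτ),
      pd_mul ((differentiableAt_const _).fun_mul (diffAt_Pl b p)) (diffAt_Pl c p),
      pd_const_mul (diffAt_Pl b p), pd_Pl, pd_Pl,
      pd_inv (diffAt_t1q p) hτ, pd_t1q hgsymm]
    field_simp
    ring
  rw [h2nd]
  have e1 : pd a (pd b (pd c Fs)) (iota g d p) = c3 Fs a b c (iota g d p) := rfl
  rw [e1, hg c b, hg b a, hg c a]
  field_simp
  ring

end Steps3


set_option maxHeartbeats 2000000 in
/-- inversion symmetry of almost dual prepotentials, case `d ≠ 1`:
if `F*` satisfies the associativity equations w.r.t. `g` together with the dual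
quasihomogeneity condition, then `F̂*(p) = t₁(p)² F*(ι(p))` satisfies the associativity
equations w.r.t. `g` on `V' = {p : t₁(p) ≠ 0, ι(p) ∈ V}`. -/
theorem statement11 {N : ℕ}
    (g : Matrix (Fin N) (Fin N) ℝ) (hgsymm : g.IsSymm) (hgdet : IsUnit g.det)
    (d : ℝ) (hd : d ≠ 1)
    (V : Set (Fin N → ℝ)) (hV : IsOpen V)
    (Fs : (Fin N → ℝ) → ℝ)
    (hFs : ∀ p ∈ V, ContDiffAt ℝ (⊤ : ℕ∞) Fs p)
    (hassoc : IsAssocG Fs g V)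
    (hQH : ∀ p ∈ V, (∑ σ, p σ * pd σ Fs p) =
      2 * Fs p + (1 / (1 - d)) * ∑ a, ∑ b, g a b * p a * p b) :
    IsAssocG (fun p => (t1q g d p) ^ 2 * Fs (iota g d p)) g
      {p | t1q g d p ≠ 0 ∧ iota g d p ∈ V} := by
  have hk : (1:ℝ) - d ≠ 0 := sub_ne_zero.mpr fun h => hd h.symm
  have hg : ∀ i j, g i j = g j i := by
    intro i j
    conv_lhs => rw [← hgsymm]
    rfl
  have hQHG : ∀ p' ∈ V, (∑ σ, p' σ * pd σ Fs p') = 2 * Fs p' + (1 / (1 - d)) * Gq g p' :=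
    fun p' hp' => hQH p' hp'
  have hinv1 : g⁻¹ * g = 1 := Matrix.nonsing_inv_mul g hgdet
  have hinv2 : g * g⁻¹ = 1 := Matrix.mul_nonsing_inv g hgdet
  have K1 : ∀ l w : Fin N, (∑ mu, g⁻¹ l mu * g mu w) = if l = w then 1 else 0 := by
    intro l w
    have h := congrFun (congrFun hinv1 l) w
    rw [Matrix.mul_apply] at h
    rw [h, Matrix.one_apply]
  have K1' : ∀ y mu0 : Fin N, (∑ l, g y l * g⁻¹ l mu0) = if y = mu0 then 1 else 0 := by
    intro y mu0
    have h := congrFun (congrFun hinv2 y) mu0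
    rw [Matrix.mul_apply] at h
    rw [h, Matrix.one_apply]
  intro p hp a b c e
  have hτ : t1q g d p ≠ 0 := hp.1
  have hq : iota g d p ∈ V := hp.2
  have hA12 : ∀ u v t, c3 Fs u v t (iota g d p) = c3 Fs v u t (iota g d p) :=
    fun u v t => c3_swap12 (hFs _ hq) u v t
  have hA23 : ∀ u v t, c3 Fs u v t (iota g d p) = c3 Fs u t v (iota g d p) :=
    fun u v t => c3_swap23 hV hFs hq u v t
  have hC : ∀ x y z : Fin N,
      c3 (fun p => (t1q g d p) ^ 2 * Fs (iota g d p)) x y z p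
      = (1 / t1q g d p) * c3 Fs x y z (iota g d p)
        - (2 / t1q g d p) * (Pl g x p * g y z + Pl g y p * g x z + Pl g z p * g x y)
        + (2 * (1 - d) / (t1q g d p) ^ 2) * (Pl g x p * Pl g y p * Pl g z p) :=
    fun x y z => stepC hgsymm hd hV hFs hQHG hτ hq x y z
  have K2 : ∀ l, (∑ mu, g⁻¹ l mu * Pl g mu p) = p l := by
    intro l
    have h1 : ∀ mu : Fin N, g⁻¹ l mu * Pl g mu p = ∑ σ, g⁻¹ l mu * g mu σ * p σ := by
      intro mu
      simp only [Pl, Finset.mul_sum]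
      exact Finset.sum_congr rfl fun σ _ => by ring
    rw [Finset.sum_congr rfl fun mu _ => h1 mu, Finset.sum_comm]
    have h2 : ∀ σ, (∑ mu, g⁻¹ l mu * g mu σ * p σ) = (if l = σ then 1 else 0) * p σ := by
      intro σ
      rw [← Finset.sum_mul, K1 l σ]
    rw [Finset.sum_congr rfl fun σ _ => h2 σ]
    simp
  have K2' : ∀ mu0, (∑ l, Pl g l p * g⁻¹ l mu0) = p mu0 := by
    intro mu0
    have h1 : ∀ l : Fin N, Pl g l p * g⁻¹ l mu0 = ∑ σ, p σ * (g σ l * g⁻¹ l mu0) := by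
      intro l
      simp only [Pl, Finset.sum_mul]
      refine Finset.sum_congr rfl fun σ _ => ?_
      rw [hg l σ]; ring
    rw [Finset.sum_congr rfl fun l _ => h1 l, Finset.sum_comm]
    have h2 : ∀ σ, (∑ l, p σ * (g σ l * g⁻¹ l mu0)) = p σ * (if σ = mu0 then 1 else 0) := by
      intro σ
      rw [← Finset.mul_sum, K1' σ mu0]
    rw [Finset.sum_congr rfl fun σ _ => h2 σ]
    simp
  have K3 : (∑ l, Pl g l p * p l) = Gq g p := by
    simp only [Pl, Gq, Finset.sum_mul]
    exact Finset.sum_congr rfl fun l _ => Finset.sum_congr rfl fun σ _ => by ring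
  have K4 : ∀ x y, (∑ l, c3 Fs x y l (iota g d p) * p l)
      = t1q g d p * ((2 / (1 - d)) * g y x) := by
    intro x y
    have h1 : ∀ l, c3 Fs x y l (iota g d p) * p l
        = t1q g d p * (iota g d p l * c3 Fs x l y (iota g d p)) := by
      intro l
      rw [hA23 x y l, p_eq_tau_iota hτ l]; ring
    rw [Finset.sum_congr rfl fun l _ => h1 l, ← Finset.mul_sum,
      eulerE2 hgsymm hV hFs hQHG _ hq x y]
  -- the master expansion
  have hsum : ∀ x y z w : Fin N,
      (∑ lam, ∑ mu, c3 (fun p => (t1q g d p) ^ 2 * Fs (iota g d p)) x y lam p * g⁻¹ lam mu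
        * c3 (fun p => (t1q g d p) ^ 2 * Fs (iota g d p)) mu z w p)
      = (1 / t1q g d p) * ( (1 / t1q g d p)
            * (∑ lam, ∑ mu, c3 Fs x y lam (iota g d p) * g⁻¹ lam mu
                * c3 Fs z w mu (iota g d p))
          + (-(2 / t1q g d p) * Pl g x p) * c3 Fs z w y (iota g d p)
          + (-(2 / t1q g d p) * Pl g y p) * c3 Fs z w x (iota g d p)
          + (-(2 / t1q g d p) * g x y
              + (2 * (1 - d) / (t1q g d p) ^ 2) * (Pl g x p * Pl g y p))
            * (t1q g d p * ((2 / (1 - d)) * g w z)) )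
        + (-(2 / t1q g d p) * g z w
            + (2 * (1 - d) / (t1q g d p) ^ 2) * (Pl g z p * Pl g w p)) *
          ( (1 / t1q g d p) * (t1q g d p * ((2 / (1 - d)) * g y x))
            + (-(2 / t1q g d p) * Pl g x p) * Pl g y p
            + (-(2 / t1q g d p) * Pl g y p) * Pl g x p
            + (-(2 / t1q g d p) * g x y
                + (2 * (1 - d) / (t1q g d p) ^ 2) * (Pl g x p * Pl g y p))
              * (2 * t1q g d p / (1 - d)) )
        + (-(2 / t1q g d p) * Pl g z p)
          * c3 (fun p => (t1q g d p) ^ 2 * Fs (iota g d p)) x y w p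
        + (-(2 / t1q g d p) * Pl g w p)
          * c3 (fun p => (t1q g d p) ^ 2 * Fs (iota g d p)) x y z p := by
    intro x y z w
    have hzw : ∀ mu, c3 Fs mu z w (iota g d p) = c3 Fs z w mu (iota g d p) := by
      intro mu
      rw [hA12 mu z w, hA23 z mu w]
    have hinner : ∀ l, (∑ mu, g⁻¹ l mu
          * c3 (fun p => (t1q g d p) ^ 2 * Fs (iota g d p)) mu z w p)
        = (1 / t1q g d p) * (∑ mu, g⁻¹ l mu * c3 Fs z w mu (iota g d p))
          - (2 / t1q g d p) * g z w * p l
          - (2 / t1q g d p) * Pl g z p * (if l = w then 1 else 0)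
          - (2 / t1q g d p) * Pl g w p * (if l = z then 1 else 0)
          + (2 * (1 - d) / (t1q g d p) ^ 2) * (Pl g z p * Pl g w p) * p l := by
      intro l
      have hterm : ∀ mu, g⁻¹ l mu * c3 (fun p => (t1q g d p) ^ 2 * Fs (iota g d p)) mu z w p
          = (1 / t1q g d p) * (g⁻¹ l mu * c3 Fs z w mu (iota g d p))
            - (2 / t1q g d p) * g z w * (g⁻¹ l mu * Pl g mu p)
            - (2 / t1q g d p) * Pl g z p * (g⁻¹ l mu * g mu w)
            - (2 / t1q g d p) * Pl g w p * (g⁻¹ l mu * g mu z)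
            + (2 * (1 - d) / (t1q g d p) ^ 2) * (Pl g z p * Pl g w p)
              * (g⁻¹ l mu * Pl g mu p) := by
        intro mu
        rw [hC mu z w, hzw mu]
        ring
      rw [Finset.sum_congr rfl fun mu _ => hterm mu]
      rw [Finset.sum_add_distrib, Finset.sum_sub_distrib, Finset.sum_sub_distrib,
        Finset.sum_sub_distrib, ← Finset.mul_sum, ← Finset.mul_sum, ← Finset.mul_sum,
        ← Finset.mul_sum, ← Finset.mul_sum]
      rw [K2 l, K1 l w, K1 l z]
    have hout : (∑ lam, ∑ mu, c3 (fun p => (t1q g d p) ^ 2 * Fs (iota g d p)) x y lam p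
          * g⁻¹ lam mu * c3 (fun p => (t1q g d p) ^ 2 * Fs (iota g d p)) mu z w p)
        = ∑ lam, c3 (fun p => (t1q g d p) ^ 2 * Fs (iota g d p)) x y lam p
            * (∑ mu, g⁻¹ lam mu * c3 (fun p => (t1q g d p) ^ 2 * Fs (iota g d p)) mu z w p) := by
      refine Finset.sum_congr rfl fun lam _ => ?_
      rw [Finset.mul_sum]
      exact Finset.sum_congr rfl fun mu _ => by ring
    rw [hout]
    have hlam : ∀ l, c3 (fun p => (t1q g d p) ^ 2 * Fs (iota g d p)) x y l p
          * (∑ mu, g⁻¹ l mu * c3 (fun p => (t1q g d p) ^ 2 * Fs (iota g d p)) mu z w p)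
        = (1 / t1q g d p) * (c3 (fun p => (t1q g d p) ^ 2 * Fs (iota g d p)) x y l p
              * (∑ mu, g⁻¹ l mu * c3 Fs z w mu (iota g d p)))
          + (-(2 / t1q g d p) * g z w
              + (2 * (1 - d) / (t1q g d p) ^ 2) * (Pl g z p * Pl g w p))
            * (c3 (fun p => (t1q g d p) ^ 2 * Fs (iota g d p)) x y l p * p l)
          + (-(2 / t1q g d p) * Pl g z p)
            * (if l = w then c3 (fun p => (t1q g d p) ^ 2 * Fs (iota g d p)) x y l p else 0)
          + (-(2 / t1q g d p) * Pl g w p)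
            * (if l = z then c3 (fun p => (t1q g d p) ^ 2 * Fs (iota g d p)) x y l p else 0) := by
      intro l
      rw [hinner l]
      split_ifs <;> ring
    rw [Finset.sum_congr rfl fun l _ => hlam l]
    rw [Finset.sum_add_distrib, Finset.sum_add_distrib, Finset.sum_add_distrib,
      ← Finset.mul_sum, ← Finset.mul_sum, ← Finset.mul_sum, ← Finset.mul_sum,
      Finset.sum_ite_eq' Finset.univ w
        (fun l => c3 (fun p => (t1q g d p) ^ 2 * Fs (iota g d p)) x y l p),
      Finset.sum_ite_eq' Finset.univ z
        (fun l => c3 (fun p => (t1q g d p) ^ 2 * Fs (iota g d p)) x y l p)]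
    simp only [Finset.mem_univ, if_true]
    -- the two remaining sums
    have hgW : ∀ y' : Fin N, (∑ l, g y' l * (∑ mu, g⁻¹ l mu * c3 Fs z w mu (iota g d p)))
        = c3 Fs z w y' (iota g d p) := by
      intro y'
      have h1 : ∀ l, g y' l * (∑ mu, g⁻¹ l mu * c3 Fs z w mu (iota g d p))
          = ∑ mu, g y' l * g⁻¹ l mu * c3 Fs z w mu (iota g d p) := by
        intro l
        rw [Finset.mul_sum]
        exact Finset.sum_congr rfl fun mu _ => by ring
      rw [Finset.sum_congr rfl fun l _ => h1 l, Finset.sum_comm]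
      have h2 : ∀ mu, (∑ l, g y' l * g⁻¹ l mu * c3 Fs z w mu (iota g d p))
          = (if y' = mu then 1 else 0) * c3 Fs z w mu (iota g d p) := by
        intro mu
        rw [← Finset.sum_mul, K1' y' mu]
      rw [Finset.sum_congr rfl fun mu _ => h2 mu]
      simp
    have hPW : (∑ l, Pl g l p * (∑ mu, g⁻¹ l mu * c3 Fs z w mu (iota g d p)))
        = t1q g d p * ((2 / (1 - d)) * g w z) := by
      have h1 : ∀ l, Pl g l p * (∑ mu, g⁻¹ l mu * c3 Fs z w mu (iota g d p))
          = ∑ mu, Pl g l p * g⁻¹ l mu * c3 Fs z w mu (iota g d p) := by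
        intro l
        rw [Finset.mul_sum]
        exact Finset.sum_congr rfl fun mu _ => by ring
      rw [Finset.sum_congr rfl fun l _ => h1 l, Finset.sum_comm]
      have h2 : ∀ mu, (∑ l, Pl g l p * g⁻¹ l mu * c3 Fs z w mu (iota g d p))
          = c3 Fs z w mu (iota g d p) * p mu := by
        intro mu
        rw [← Finset.sum_mul, K2' mu]
        ring
      rw [Finset.sum_congr rfl fun mu _ => h2 mu, K4 z w]
    have hSW : (∑ l, c3 (fun p => (t1q g d p) ^ 2 * Fs (iota g d p)) x y l p
          * (∑ mu, g⁻¹ l mu * c3 Fs z w mu (iota g d p)))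
        = (1 / t1q g d p) * (∑ lam, ∑ mu, c3 Fs x y lam (iota g d p) * g⁻¹ lam mu
              * c3 Fs z w mu (iota g d p))
          + (-(2 / t1q g d p) * Pl g x p) * c3 Fs z w y (iota g d p)
          + (-(2 / t1q g d p) * Pl g y p) * c3 Fs z w x (iota g d p)
          + (-(2 / t1q g d p) * g x y
              + (2 * (1 - d) / (t1q g d p) ^ 2) * (Pl g x p * Pl g y p))
            * (t1q g d p * ((2 / (1 - d)) * g w z)) := by
      have h1 : ∀ l, c3 (fun p => (t1q g d p) ^ 2 * Fs (iota g d p)) x y l p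
            * (∑ mu, g⁻¹ l mu * c3 Fs z w mu (iota g d p))
          = (1 / t1q g d p) * (c3 Fs x y l (iota g d p)
                * (∑ mu, g⁻¹ l mu * c3 Fs z w mu (iota g d p)))
            + (-(2 / t1q g d p) * Pl g x p)
              * (g y l * (∑ mu, g⁻¹ l mu * c3 Fs z w mu (iota g d p)))
            + (-(2 / t1q g d p) * Pl g y p)
              * (g x l * (∑ mu, g⁻¹ l mu * c3 Fs z w mu (iota g d p)))
            + (-(2 / t1q g d p) * g x y
                + (2 * (1 - d) / (t1q g d p) ^ 2) * (Pl g x p * Pl g y p))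
              * (Pl g l p * (∑ mu, g⁻¹ l mu * c3 Fs z w mu (iota g d p))) := by
        intro l
        rw [hC x y l]
        ring
      rw [Finset.sum_congr rfl fun l _ => h1 l]
      rw [Finset.sum_add_distrib, Finset.sum_add_distrib, Finset.sum_add_distrib,
        ← Finset.mul_sum, ← Finset.mul_sum, ← Finset.mul_sum, ← Finset.mul_sum]
      rw [hgW y, hgW x, hPW]
      have hAA2 : (∑ l, c3 Fs x y l (iota g d p)
            * (∑ mu, g⁻¹ l mu * c3 Fs z w mu (iota g d p)))
          = ∑ lam, ∑ mu, c3 Fs x y lam (iota g d p) * g⁻¹ lam mu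
              * c3 Fs z w mu (iota g d p) := by
        refine Finset.sum_congr rfl fun lam _ => ?_
        rw [Finset.mul_sum]
        exact Finset.sum_congr rfl fun mu _ => by ring
      rw [hAA2]
    have hSP : (∑ l, c3 (fun p => (t1q g d p) ^ 2 * Fs (iota g d p)) x y l p * p l)
        = (1 / t1q g d p) * (t1q g d p * ((2 / (1 - d)) * g y x))
          + (-(2 / t1q g d p) * Pl g x p) * Pl g y p
          + (-(2 / t1q g d p) * Pl g y p) * Pl g x p
          + (-(2 / t1q g d p) * g x y
              + (2 * (1 - d) / (t1q g d p) ^ 2) * (Pl g x p * Pl g y p))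
            * (2 * t1q g d p / (1 - d)) := by
      have h1 : ∀ l, c3 (fun p => (t1q g d p) ^ 2 * Fs (iota g d p)) x y l p * p l
          = (1 / t1q g d p) * (c3 Fs x y l (iota g d p) * p l)
            + (-(2 / t1q g d p) * Pl g x p) * (g y l * p l)
            + (-(2 / t1q g d p) * Pl g y p) * (g x l * p l)
            + (-(2 / t1q g d p) * g x y
                + (2 * (1 - d) / (t1q g d p) ^ 2) * (Pl g x p * Pl g y p))
              * (Pl g l p * p l) := by
        intro l
        rw [hC x y l]
        ring
      rw [Finset.sum_congr rfl fun l _ => h1 l]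
      rw [Finset.sum_add_distrib, Finset.sum_add_distrib, Finset.sum_add_distrib,
        ← Finset.mul_sum, ← Finset.mul_sum, ← Finset.mul_sum, ← Finset.mul_sum]
      rw [K4 x y, K3, Gq_p_eq hk]
      have hgy : (∑ l, g y l * p l) = Pl g y p := rfl
      have hgx : (∑ l, g x l * p l) = Pl g x p := rfl
      rw [hgy, hgx]
    rw [hSW, hSP]
  -- symmetry of the AA double sum, from associativity at ι(p)
  have hAA : (∑ lam, ∑ mu, c3 Fs a b lam (iota g d p) * g⁻¹ lam mu
        * c3 Fs c e mu (iota g d p))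
      = (∑ lam, ∑ mu, c3 Fs c b lam (iota g d p) * g⁻¹ lam mu
        * c3 Fs a e mu (iota g d p)) := by
    have h := hassoc (iota g d p) hq a b c e
    have e1 : ∀ lam mu : Fin N, c3 Fs a b lam (iota g d p) * g⁻¹ lam mu
          * c3 Fs c e mu (iota g d p)
        = c3 Fs a b lam (iota g d p) * g⁻¹ lam mu * c3 Fs mu c e (iota g d p) := by
      intro lam mu
      rw [show c3 Fs c e mu (iota g d p) = c3 Fs mu c e (iota g d p) from by
        rw [hA23 c e mu, hA12 c mu e]]
    have e2 : ∀ lam mu : Fin N, c3 Fs c b lam (iota g d p) * g⁻¹ lam mu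
          * c3 Fs a e mu (iota g d p)
        = c3 Fs c b lam (iota g d p) * g⁻¹ lam mu * c3 Fs mu a e (iota g d p) := by
      intro lam mu
      rw [show c3 Fs a e mu (iota g d p) = c3 Fs mu a e (iota g d p) from by
        rw [hA23 a e mu, hA12 a mu e]]
    rw [Finset.sum_congr rfl fun lam _ => Finset.sum_congr rfl fun mu _ => e1 lam mu,
      Finset.sum_congr rfl fun lam _ => Finset.sum_congr rfl fun mu _ => e2 lam mu]
    exact h
  rw [hsum a b c e, hsum c b a e, hAA, hC a b e, hC a b c, hC c b e, hC c b a]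
  -- index-symmetry normalisations
  have r1 : c3 Fs c e b (iota g d p) = c3 Fs c b e (iota g d p) := hA23 c e b
  have r2 : c3 Fs c e a (iota g d p) = c3 Fs c a e (iota g d p) := hA23 c e a
  have r3 : c3 Fs a e c (iota g d p) = c3 Fs c a e (iota g d p) := by
    rw [hA23 a e c, hA12 a c e]
  have r4 : c3 Fs a e b (iota g d p) = c3 Fs a b e (iota g d p) := hA23 a e b
  have r5 : c3 Fs c b a (iota g d p) = c3 Fs a b c (iota g d p) := by
    rw [hA12 c b a, hA23 b c a, hA12 b a c]
  rw [r1, r2, r3, r4, r5]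
  rw [hg e c, hg b a, hg e a, hg c b, hg c a]
  field_simp
  ring
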